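/- arXiv:2311.08918 — 5 statements merged into one kernel-verified Lean document; each statement's English description precedes it below -/
import Mathlib

section
/- For all parameters c ∈ [0,√2) and κ ∈ (0,1/2), and for all y ∈ (0, 1−c²/2), the function F(y) = 2√κ·atan(√κ·√((2−c²−2y)/(1−2κ+2κy))) + 2√((1−2κ)/(2−c²))·atanh(√((1−2κ)(2−c²−2y)/((2−c²)(1−2κ+2κy)))) is well-defined (all square roots have nonnegative arguments and the atanh argument lies in (−1,1)) and its derivative equals F'(y) = −(1/y)·√((1−2κ+2κy)/(2−c²−2y)). -/
open Real

noncomputable def artanh (x : ℝ) : ℝ := (1/2) * Real.log ((1 + x) / (1 - x))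

lemma hasDerivAt_artanh {x : ℝ} (h1 : -1 < x) (h2 : x < 1) :
    HasDerivAt _root_.artanh (1/(1-x^2)) x := by
  have hne : (1 - x) ≠ 0 := by intro h; linarith [h]
  have hne' : (1:ℝ) - x ≠ 0 := hne
  have hnum : HasDerivAt (fun t : ℝ => 1 + t) 1 x := by
    simpa using (hasDerivAt_id x).const_add 1
  have hden : HasDerivAt (fun t : ℝ => 1 - t) (-1) x := by
    simpa using (hasDerivAt_id x).const_sub 1
  have hdiv := hnum.div hden hne'
  have hpos : 0 < (1+x)/(1-x) := div_pos (by linarith) (by linarith)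
  have hlog := (hdiv.log hpos.ne').const_mul (1/2 : ℝ)
  have harg : _root_.artanh = fun t : ℝ => (1/2) * Real.log ((1 + t) / (1 - t)) := rfl
  rw [harg]
  refine HasDerivAt.congr_deriv hlog (Eq.symm ?_)
  have hpx : (1:ℝ) + x ≠ 0 := by intro h; linarith
  have hx2 : (1:ℝ) - x^2 ≠ 0 := by nlinarith
  simp only [Pi.div_apply]; field_simp
  ring

lemma t1lem (K T D Z κ : ℝ) (hK2 : K^2 = κ) (hD : D ≠ 0) (hT : T ≠ 0) (hZ : Z ≠ 0) :
    2*K*(1/(Z/D) * (K * (-2*Z/D^2/(2*T)))) = -(2*κ)/(D*T) := by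
  rw [← hK2]; field_simp

set_option maxHeartbeats 1000000 in
lemma aux (a κ y : ℝ) (ha : 0 < a) (hκ0 : 0 < κ) (hb : 0 < 1 - 2*κ)
    (hy0 : 0 < y) (hN : 0 < a - 2*y) :
    HasDerivAt
      (fun z : ℝ =>
        2 * Real.sqrt κ *
            Real.arctan (Real.sqrt κ * Real.sqrt ((a - 2*z) / (1 - 2*κ + 2*κ*z))) +
          2 * Real.sqrt ((1 - 2*κ) / a) *
            _root_.artanh (Real.sqrt ((1 - 2*κ) * (a - 2*z) / (a * (1 - 2*κ + 2*κ*z)))))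
      (-(1/y) * Real.sqrt ((1 - 2*κ + 2*κ*y) / (a - 2*y))) y := by
  have hD : 0 < 1 - 2*κ + 2*κ*y := by nlinarith
  obtain ⟨D, hDdef⟩ : ∃ D : ℝ, D = 1 - 2*κ + 2*κ*y := ⟨_, rfl⟩
  obtain ⟨N, hNdef⟩ : ∃ N : ℝ, N = a - 2*y := ⟨_, rfl⟩
  rw [← hDdef] at hD
  rw [← hNdef] at hN
  have hDy : HasDerivAt (fun z : ℝ => 1 - 2*κ + 2*κ*z) (2*κ) y := by
    simpa using ((hasDerivAt_id y).const_mul (2*κ)).const_add (1 - 2*κ)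
  have hNy : HasDerivAt (fun z : ℝ => a - 2*z) (-2) y := by
    simpa using ((hasDerivAt_id y).const_mul 2).const_sub a
  have hu : HasDerivAt (fun z : ℝ => (a - 2*z) / (1 - 2*κ + 2*κ*z))
      (((-2) * D - N * (2*κ)) / D^2) y := by
    rw [hDdef, hNdef]; exact hNy.div hDy (hDdef ▸ hD).ne'
  have hUpos : 0 < N / D := div_pos hN hD
  have ht : HasDerivAt (fun z : ℝ => Real.sqrt ((a - 2*z) / (1 - 2*κ + 2*κ*z)))
      ((((-2) * D - N * (2*κ)) / D^2) / (2 * Real.sqrt (N / D))) y := by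
    have h0 : (a - 2*y) / (1 - 2*κ + 2*κ*y) ≠ 0 := by
      rw [← hDdef, ← hNdef]; exact hUpos.ne'
    have h := hu.sqrt h0
    simp only [← hDdef, ← hNdef] at h
    exact h
  obtain ⟨T, hTdef⟩ : ∃ T : ℝ, T = Real.sqrt (N / D) := ⟨_, rfl⟩
  rw [← hTdef] at ht
  have hT : 0 < T := hTdef ▸ Real.sqrt_pos.mpr hUpos
  have hT2 : T^2 = N / D := hTdef ▸ Real.sq_sqrt hUpos.le
  have harc : HasDerivAt
      (fun z : ℝ => 2 * Real.sqrt κ * Real.arctan (Real.sqrt κ *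
        Real.sqrt ((a - 2*z) / (1 - 2*κ + 2*κ*z))))
      (2 * Real.sqrt κ * (1 / (1 + (Real.sqrt κ * T)^2) *
        (Real.sqrt κ * ((((-2) * D - N * (2*κ)) / D^2) / (2 * T))))) y := by
    have h := ((ht.const_mul (Real.sqrt κ)).arctan).const_mul (2 * Real.sqrt κ)
    simp only [← hDdef, ← hNdef, ← hTdef] at h
    exact h
  have hv : HasDerivAt (fun z : ℝ => (1 - 2*κ) * (a - 2*z) / (a * (1 - 2*κ + 2*κ*z)))
      ((((1-2*κ) * (-2)) * (a * D) - ((1-2*κ) * N) * (a * (2*κ))) / (a * D)^2) y := by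
    rw [hDdef, hNdef]
    exact (hNy.const_mul (1 - 2*κ)).div (hDy.const_mul a)
      (by rw [← hDdef] at *; positivity)
  have hVpos : 0 < (1 - 2*κ) * N / (a * D) := by positivity
  have hs : HasDerivAt (fun z : ℝ => Real.sqrt ((1 - 2*κ) * (a - 2*z) / (a * (1 - 2*κ + 2*κ*z))))
      (((((1-2*κ) * (-2)) * (a * D) - ((1-2*κ) * N) * (a * (2*κ))) / (a * D)^2) /
        (2 * Real.sqrt ((1 - 2*κ) * N / (a * D)))) y := by
    have h0 : (1 - 2*κ) * (a - 2*y) / (a * (1 - 2*κ + 2*κ*y)) ≠ 0 := by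
      rw [← hDdef, ← hNdef]; exact hVpos.ne'
    have h := hv.sqrt h0
    simp only [← hDdef, ← hNdef] at h
    exact h
  obtain ⟨S, hSdef⟩ : ∃ S : ℝ, S = Real.sqrt ((1 - 2*κ) * N / (a * D)) := ⟨_, rfl⟩
  rw [← hSdef] at hs
  have hS : 0 < S := hSdef ▸ Real.sqrt_pos.mpr hVpos
  have hS2 : S^2 = (1 - 2*κ) * N / (a * D) := hSdef ▸ Real.sq_sqrt hVpos.le
  have hS1 : S < 1 := by
    rw [hSdef, Real.sqrt_lt' one_pos, one_pow, div_lt_one (by positivity)]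
    rw [hNdef, hDdef]
    nlinarith [mul_pos (mul_pos hκ0 hy0) ha, mul_pos hy0 hb]
  have hatanh := hasDerivAt_artanh (lt_of_lt_of_le (by norm_num) hS.le) hS1
  have hart : HasDerivAt
      (fun z : ℝ => 2 * Real.sqrt ((1 - 2*κ) / a) *
        _root_.artanh (Real.sqrt ((1 - 2*κ) * (a - 2*z) / (a * (1 - 2*κ + 2*κ*z)))))
      (2 * Real.sqrt ((1 - 2*κ) / a) * ((1/(1-S^2)) *
        ((((1-2*κ) * (-2)) * (a * D) - ((1-2*κ) * N) * (a * (2*κ))) / (a * D)^2 /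
          (2 * S)))) y := by
    have hpt : Real.sqrt ((1 - 2*κ) * (a - 2*y) / (a * (1 - 2*κ + 2*κ*y))) = S := by
      rw [hSdef, hNdef, hDdef]
    have hatanh' : HasDerivAt _root_.artanh (1/(1-S^2))
        (Real.sqrt ((1 - 2*κ) * (a - 2*y) / (a * (1 - 2*κ + 2*κ*y)))) := by
      rw [hpt]; exact hatanh
    have h := (hatanh'.comp y hs).const_mul (2 * Real.sqrt ((1 - 2*κ) / a))
    exact h
  have hsum := harc.add hart
  have hgoal : -(1/y) * Real.sqrt ((1 - 2*κ + 2*κ*y) / (a - 2*y)) = -(1/y) * Real.sqrt (D / N) := by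
    rw [hDdef, hNdef]
  rw [hgoal]
  refine HasDerivAt.congr_deriv hsum (Eq.symm ?_)
  have hQpos : (0:ℝ) < Real.sqrt ((1 - 2*κ) / a) := Real.sqrt_pos.mpr (by positivity)
  obtain ⟨Q, hQdef⟩ : ∃ Q : ℝ, Q = Real.sqrt ((1 - 2*κ) / a) := ⟨_, rfl⟩
  rw [← hQdef]
  have hQ : 0 < Q := hQdef ▸ hQpos
  have hQ2 : Q^2 = (1 - 2*κ) / a := by
    rw [hQdef]; exact Real.sq_sqrt (by positivity)
  have hSQ : S = Q * T := by
    rw [hSdef, hQdef, hTdef, ← Real.sqrt_mul (by positivity)]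
    congr 1
    field_simp
  obtain ⟨K, hKdef⟩ : ∃ K : ℝ, K = Real.sqrt κ := ⟨_, rfl⟩
  rw [← hKdef]
  have hK : 0 < K := hKdef ▸ Real.sqrt_pos.mpr hκ0
  have hK2 : K^2 = κ := hKdef ▸ Real.sq_sqrt hκ0.le
  have hDN : Real.sqrt (D / N) = 1 / T := by
    rw [hTdef, one_div, ← Real.sqrt_inv, inv_div]
  rw [hDN, hSQ]
  have h1 : 1 + (K * T)^2 = (1 - 2*κ + κ*a) / D := by
    rw [mul_pow, hK2, hT2]; field_simp [hD.ne']; rw [hDdef, hNdef]; ring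
  have h2 : 1 - (Q * T)^2 = 2*y*(1 - 2*κ + κ*a) / (a * D) := by
    rw [mul_pow, hQ2, hT2, hDdef, hNdef]; field_simp; ring
  have e1 : (-2*D - N*(2*κ)) = -2*(1 - 2*κ + κ*a) := by rw [hDdef, hNdef]; ring
  have e2 : (1 - 2*κ)*(-2)*(a*D) - (1 - 2*κ)*N*(a*(2*κ)) = -2*a*(1 - 2*κ)*(1 - 2*κ + κ*a) := by
    rw [hDdef, hNdef]; ring
  rw [h1, h2, e1, e2]
  have hba : 0 < 1 - 2*κ + κ*a := by nlinarith
  have hT' : T ≠ 0 := hT.ne'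
  have hQ' : Q ≠ 0 := hQ.ne'
  have hy' : y ≠ 0 := hy0.ne'
  have t1 := t1lem K T D (1 - 2*κ + κ*a) κ hK2 hD.ne' hT' hba.ne'
  have t2 : 2*Q*(1/(2*y*(1 - 2*κ + κ*a)/(a*D)) *
      (-2*a*(1 - 2*κ)*(1 - 2*κ + κ*a)/(a*D)^2/(2*(Q*T)))) = -(1 - 2*κ)/(y*(D*T)) := by
    field_simp
  rw [t1, t2, hDdef]
  field_simp
  ring

/-- well-definedness of `F_{c,κ}` and its derivative. -/
theorem stmt_0 (c κ : ℝ) (hc0 : 0 ≤ c) (hc : c < Real.sqrt 2)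
    (hκ0 : 0 < κ) (hκ : κ < 1/2) (y : ℝ) (hy : y ∈ Set.Ioo 0 (1 - c^2/2)) :
    (0 ≤ (2 - c^2 - 2*y) / (1 - 2*κ + 2*κ*y)) ∧
    (0 ≤ (1 - 2*κ) / (2 - c^2)) ∧
    (Real.sqrt ((1 - 2*κ) * (2 - c^2 - 2*y) / ((2 - c^2) * (1 - 2*κ + 2*κ*y)))
        ∈ Set.Ioo (-1 : ℝ) 1) ∧
    HasDerivAt
      (fun z : ℝ =>
        2 * Real.sqrt κ *
            Real.arctan (Real.sqrt κ * Real.sqrt ((2 - c^2 - 2*z) / (1 - 2*κ + 2*κ*z))) +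
          2 * Real.sqrt ((1 - 2*κ) / (2 - c^2)) *
            _root_.artanh (Real.sqrt ((1 - 2*κ) * (2 - c^2 - 2*z) / ((2 - c^2) * (1 - 2*κ + 2*κ*z)))))
      (-(1/y) * Real.sqrt ((1 - 2*κ + 2*κ*y) / (2 - c^2 - 2*y))) y := by
  obtain ⟨hy0, hy1⟩ := hy
  have h2 : (Real.sqrt 2)^2 = 2 := Real.sq_sqrt (by norm_num)
  have ha : 0 < 2 - c^2 := by nlinarith [Real.sqrt_nonneg 2]
  have hb : 0 < 1 - 2*κ := by linarith
  have hN : 0 < 2 - c^2 - 2*y := by linarith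
  have hD : 0 < 1 - 2*κ + 2*κ*y := by nlinarith
  refine ⟨div_nonneg hN.le hD.le, div_nonneg hb.le ha.le, ⟨?_, ?_⟩, ?_⟩
  · exact lt_of_lt_of_le (by norm_num) (Real.sqrt_nonneg _)
  · rw [Real.sqrt_lt' one_pos, one_pow, div_lt_one (by positivity)]
    nlinarith [mul_pos (mul_pos hκ0 hy0) ha, mul_pos hy0 hb]
  · exact aux (2 - c^2) κ y ha hκ0 hb hy0 hN
end

section
/- Let c ≥ 0, κ ∈ ℝ, and suppose η ∈ C²(ℝ) satisfies the first-order ODE (1−2κ+2κη)(η')² = η²(2−c²−2η) on ℝ and η tends to 0 at ±∞. If η attains a global extremum of |η| at the origin, then either η ≡ 0 on ℝ, or η(0) = 1 − c²/2. -/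
open Filter

/-- if `η ∈ C²(ℝ)` satisfies `(1-2κ+2κη)(η')² = η²(2-c²-2η)`,
tends to `0` at `±∞`, and `|η|` attains its global maximum at the origin,
then either `η ≡ 0` or `η(0) = 1 - c²/2`. -/
theorem stmt_2 (c κ : ℝ) (hc : 0 ≤ c) (η : ℝ → ℝ)
    (hreg : ContDiff ℝ 2 η)
    (hode : ∀ x : ℝ,
      (1 - 2*κ + 2*κ*η x) * (deriv η x)^2 = (η x)^2 * (2 - c^2 - 2*η x))
    (htop : Tendsto η atTop (nhds 0)) (hbot : Tendsto η atBot (nhds 0))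
    (hmax : ∀ x : ℝ, |η x| ≤ |η 0|) :
    (∀ x : ℝ, η x = 0) ∨ η 0 = 1 - c^2/2 := by
  by_cases h0 : η 0 = 0
  · left
    intro x
    have := hmax x
    rw [h0, abs_zero] at this
    exact abs_eq_zero.mp (le_antisymm this (abs_nonneg _))
  · right
    have hdiff : Differentiable ℝ η := hreg.differentiable (by norm_num)
    have hd : HasDerivAt (fun x => (η x) ^ 2) (↑2 * η 0 ^ 1 * deriv η 0) 0 :=
      (hdiff 0).hasDerivAt.pow 2
    have hmax2 : IsLocalMax (fun x => (η x) ^ 2) 0 := by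
      apply Filter.Eventually.of_forall
      intro x
      simpa [sq_abs] using pow_le_pow_left₀ (abs_nonneg _) (hmax x) 2
    have hz : (2 : ℝ) * η 0 ^ 1 * deriv η 0 = 0 := by
      have := hmax2.hasDerivAt_eq_zero hd
      simpa using this
    have hderiv0 : deriv η 0 = 0 := by
      rcases mul_eq_zero.mp hz with h | h
      · rcases mul_eq_zero.mp h with h | h
        · norm_num at h
        · simp at h; exact absurd h h0
      · exact h
    have := hode 0
    rw [hderiv0] at this
    norm_num at this
    rcases this with h | h
    · exact absurd h h0
    · linarith
end

section
/- Let κ = 1/2 and 0 ≤ c < √2. The function η(x) = ((2−c²)/2)·cos²(x/√2) satisfies both equations: η·η'' + (η')²/2 = −3η² + (2−c²)η and η·(η')² = η²(2−c²−2η) on all of ℝ. -/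
lemma aux_hasDeriv (A x : ℝ) :
    HasDerivAt (fun x : ℝ => A * Real.cos (x / Real.sqrt 2)^2)
      (-(2 * A * (Real.sqrt 2)⁻¹) * (Real.sin (x / Real.sqrt 2) * Real.cos (x / Real.sqrt 2))) x := by
  have h1 : HasDerivAt (fun x : ℝ => x / Real.sqrt 2) ((Real.sqrt 2)⁻¹) x := by
    simpa using (hasDerivAt_id x).div_const (Real.sqrt 2)
  have h2 := (Real.hasDerivAt_cos (x / Real.sqrt 2)).comp x h1
  have h3 := (h2.pow 2).const_mul A
  convert h3 using 1
  · rfl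
  · rfl
  · rfl
  simp [Function.comp]
  ring

lemma aux_hasDeriv2 (A x : ℝ) :
    HasDerivAt (fun x : ℝ => -(2 * A * (Real.sqrt 2)⁻¹) * (Real.sin (x / Real.sqrt 2) * Real.cos (x / Real.sqrt 2)))
      (-(2 * A * (Real.sqrt 2)⁻¹ * (Real.sqrt 2)⁻¹) *
        (Real.cos (x / Real.sqrt 2)^2 - Real.sin (x / Real.sqrt 2)^2)) x := by
  have h1 : HasDerivAt (fun x : ℝ => x / Real.sqrt 2) ((Real.sqrt 2)⁻¹) x := by
    simpa using (hasDerivAt_id x).div_const (Real.sqrt 2)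
  have hcc := (Real.hasDerivAt_cos (x / Real.sqrt 2)).comp x h1
  have hss := (Real.hasDerivAt_sin (x / Real.sqrt 2)).comp x h1
  have h3 := (hss.mul hcc).const_mul (-(2 * A * (Real.sqrt 2)⁻¹))
  convert h3 using 1
  · rfl
  · rfl
  · rfl
  simp [Function.comp]
  ring

/-- for `κ = 1/2` and `0 ≤ c < √2`, the function
`η(x) = ((2-c²)/2)·cos²(x/√2)` satisfies
`η·η'' + (η')²/2 = -3η² + (2-c²)η` and `η·(η')² = η²(2-c²-2η)` on `ℝ`. -/
theorem stmt_4 (c : ℝ) (hc0 : 0 ≤ c) (hc : c < Real.sqrt 2) :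
    ∀ x : ℝ,
      (fun x : ℝ => (2 - c^2)/2 * Real.cos (x / Real.sqrt 2)^2) x *
          deriv (deriv (fun x : ℝ => (2 - c^2)/2 * Real.cos (x / Real.sqrt 2)^2)) x +
        (deriv (fun x : ℝ => (2 - c^2)/2 * Real.cos (x / Real.sqrt 2)^2) x)^2 / 2 =
        -3 * ((fun x : ℝ => (2 - c^2)/2 * Real.cos (x / Real.sqrt 2)^2) x)^2 +
          (2 - c^2) * (fun x : ℝ => (2 - c^2)/2 * Real.cos (x / Real.sqrt 2)^2) x ∧
      (fun x : ℝ => (2 - c^2)/2 * Real.cos (x / Real.sqrt 2)^2) x *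
          (deriv (fun x : ℝ => (2 - c^2)/2 * Real.cos (x / Real.sqrt 2)^2) x)^2 =
        ((fun x : ℝ => (2 - c^2)/2 * Real.cos (x / Real.sqrt 2)^2) x)^2 *
          (2 - c^2 - 2 * (fun x : ℝ => (2 - c^2)/2 * Real.cos (x / Real.sqrt 2)^2) x) := by
  intro x
  set A : ℝ := (2 - c^2)/2 with hA
  have hd1 : deriv (fun x : ℝ => A * Real.cos (x / Real.sqrt 2)^2)
      = fun x => -(2 * A * (Real.sqrt 2)⁻¹) * (Real.sin (x / Real.sqrt 2) * Real.cos (x / Real.sqrt 2)) :=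
    funext fun y => (aux_hasDeriv A y).deriv
  have hd2 : deriv (deriv (fun x : ℝ => A * Real.cos (x / Real.sqrt 2)^2)) x
      = -(2 * A * (Real.sqrt 2)⁻¹ * (Real.sqrt 2)⁻¹) *
        (Real.cos (x / Real.sqrt 2)^2 - Real.sin (x / Real.sqrt 2)^2) := by
    rw [hd1]; exact (aux_hasDeriv2 A x).deriv
  have hI : (Real.sqrt 2)⁻¹ * (Real.sqrt 2)⁻¹ = 1/2 := by
    rw [← mul_inv, Real.mul_self_sqrt (by norm_num : (0:ℝ) ≤ 2)]; norm_num
  have hsc : Real.sin (x / Real.sqrt 2)^2 + Real.cos (x / Real.sqrt 2)^2 = 1 :=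
    Real.sin_sq_add_cos_sq _
  simp only [hd2]
  simp only [hd1]
  set I : ℝ := (Real.sqrt 2)⁻¹
  set S : ℝ := Real.sin (x / Real.sqrt 2)
  set C : ℝ := Real.cos (x / Real.sqrt 2)
  constructor
  · linear_combination (-2*A^2*C^4 + 4*A^2*S^2*C^2) * hI + 2*A^2*C^2 * hsc + 2*A*C^2 * hA
  · linear_combination 4*A^3*S^2*C^4 * hI + 2*A^3*C^4 * hsc + 2*A^2*C^4 * hA
end

section
/- For κ < 0 and c ∈ (0,√2), define p'_κ(c) = ((3c²κ−4κ−1)/(4√(−κ)))·atanh(√(−κ)·√((2−c²)/(1−2κ))) − (3(2−c²)/4)·√((1−2κ)/(2−c²)). Viewing p'_κ as a function of s = c² ∈ (0,2), its second derivative with respect to s equals ((1−2κ)²/(4(2−s)(1−κs)²))·√((1−2κ)/(2−s)) > 0; hence p'_κ is a strictly convex function of c² on (0,2). -/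
/-- `p'_κ` viewed as a function of `s = c²`. -/
noncomputable def pderiv (κ s : ℝ) : ℝ :=
  ((3*s*κ - 4*κ - 1) / (4 * Real.sqrt (-κ))) *
      artanh (Real.sqrt (-κ) * Real.sqrt ((2 - s) / (1 - 2*κ)))
    - (3*(2 - s)/4) * Real.sqrt ((1 - 2*κ) / (2 - s))

lemma artanh_hasDerivAt {x : ℝ} (h1 : -1 < x) (h2 : x < 1) :
    HasDerivAt artanh (1/(1-x^2)) x := by
  have hp : (0:ℝ) < 1 + x := by linarith
  have hm : (0:ℝ) < 1 - x := by linarith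
  have hf : HasDerivAt (fun y : ℝ => (1+y)/(1-y))
      (((0+1)*(1-x) - (1+x)*(0-1))/(1-x)^2) x :=
    ((hasDerivAt_const x 1).add (hasDerivAt_id x)).div
      ((hasDerivAt_const x 1).sub (hasDerivAt_id x)) hm.ne'
  have hlog := hf.log (by positivity)
  have H := hlog.const_mul (1/2 : ℝ)
  have hart : HasDerivAt artanh
      (1/2 * ((((0+1)*(1-x) - (1+x)*(0-1))/(1-x)^2) / ((1+x)/(1-x)))) x := H
  convert hart using 1
  have hne : 1 - x^2 ≠ 0 := by nlinarith
  field_simp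
  ring

noncomputable def gfun (κ t : ℝ) : ℝ :=
  3*κ/(4*Real.sqrt (-κ)) * artanh (Real.sqrt (-κ) * Real.sqrt ((2-t)/(1-2*κ)))
    + (2+2*κ-3*κ*t)/(4*Real.sqrt ((2-t)/(1-2*κ))*(1-κ*t))

lemma alg1 (κ s a u B X : ℝ) (ha : 0 < a) (hu : 0 < u) (hB0 : 0 < B)
    (hb : (0:ℝ) < 1 - 2*κ) (hks : (0:ℝ) < 1 - κ*s) :
    3*1*κ/(4*a) * X
      + (3*s*κ - 4*κ - 1)/(4*a) * (1/((1-κ*s)/(1-2*κ)) * (a * (((0-1)/(1-2*κ)) / (2 * u))))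
      - 3/4 * (B * ((0-1) / (2 * (u*B))))
    = 3*κ/(4*a) * X + (2+2*κ-3*κ*s)/(4*u*(1-κ*s)) := by
  have hb' : (1:ℝ) - κ*2 ≠ 0 := (by linarith : (0:ℝ) < 1 - κ*2).ne'
  field_simp
  ring

lemma alg2 (κ a u : ℝ) (ha : 0 < a) (hu : 0 < u) (hb : (0:ℝ) < 1 - 2*κ)
    (hks : (0:ℝ) < 1 - κ*(2 - u^2*(1-2*κ))) :
    3*κ/(4*a) * ((1/((1 - κ*(2 - u^2*(1-2*κ)))/(1-2*κ))) * (a * (((0-1)/(1-2*κ)) / (2 * u))))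
      + ((0 - 3*κ*1) * (4*u*(1-κ*(2 - u^2*(1-2*κ)))) - (2+2*κ-3*κ*(2 - u^2*(1-2*κ))) *
          ((4*(((0-1)/(1-2*κ)) / (2 * u)))*(1-κ*(2 - u^2*(1-2*κ))) + (4*u)*(0-κ*1)))
          / (4*u*(1-κ*(2 - u^2*(1-2*κ))))^2
    = ((1 - 2*κ)^2 / (4*(2 - (2 - u^2*(1-2*κ)))*(1 - κ*(2 - u^2*(1-2*κ)))^2)) * (1/u) := by
  have h2s : (0:ℝ) < 2 - (2 - u^2*(1-2*κ)) := by
    nlinarith [mul_pos (mul_pos hu hu) hb, sq_nonneg u, sq_abs u]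
  have hb' : (1:ℝ) - κ*2 ≠ 0 := (by linarith : (0:ℝ) < 1 - κ*2).ne'
  field_simp
  ring

section
variable {κ : ℝ} (hκ : κ < 0) {s : ℝ} (hs : s ∈ Set.Ioo (0:ℝ) 2)
include hκ hs

lemma basic_facts :
    0 < Real.sqrt (-κ) ∧ 0 < 1 - 2*κ ∧ 0 < 2 - s ∧ 0 < 1 - κ*s ∧
    0 < Real.sqrt ((2-s)/(1-2*κ)) ∧
    1 - (Real.sqrt (-κ) * Real.sqrt ((2-s)/(1-2*κ)))^2 = (1-κ*s)/(1-2*κ) := by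
  obtain ⟨hs0, hs2⟩ := hs
  have hb : (0:ℝ) < 1 - 2*κ := by linarith
  have h2s : (0:ℝ) < 2 - s := by linarith
  have hks : (0:ℝ) < 1 - κ*s := by nlinarith
  refine ⟨Real.sqrt_pos.mpr (by linarith), hb, h2s, hks,
    Real.sqrt_pos.mpr (by positivity), ?_⟩
  have h1 : Real.sqrt (-κ)^2 = -κ := Real.sq_sqrt (by linarith)
  have h2 : Real.sqrt ((2-s)/(1-2*κ))^2 = (2-s)/(1-2*κ) := Real.sq_sqrt (by positivity)
  rw [mul_pow, h1, h2]
  have hb' : (1:ℝ) - κ*2 ≠ 0 := (by linarith : (0:ℝ) < 1 - κ*2).ne'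
  field_simp
  ring

lemma hasDerivAt_pderiv : HasDerivAt (pderiv κ) (gfun κ s) s := by
  obtain ⟨ha, hb, h2s, hks, hu, hx⟩ := basic_facts hκ hs
  obtain ⟨hs0, hs2⟩ := hs
  set a := Real.sqrt (-κ) with ha_def
  set u := Real.sqrt ((2-s)/(1-2*κ)) with hu_def
  have hu2 : u^2 = (2-s)/(1-2*κ) := Real.sq_sqrt (by positivity)
  have hx2 : (a*u)^2 < 1 := by nlinarith [div_pos hks hb]
  have hxpos : 0 ≤ a*u := by positivity
  have hx1 : -1 < a*u := by nlinarith
  have hx1' : a*u < 1 := by nlinarith [sq_nonneg (1 - a*u)]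
  have h1 : HasDerivAt (fun t : ℝ => (2-t)/(1-2*κ)) ((0-1)/(1-2*κ)) s :=
    ((hasDerivAt_const s 2).sub (hasDerivAt_id s)).div_const _
  have h2 : HasDerivAt (fun t : ℝ => Real.sqrt ((2-t)/(1-2*κ)))
      (((0-1)/(1-2*κ)) / (2 * u)) s := h1.sqrt (by positivity)
  have h3 : HasDerivAt (fun t : ℝ => a * Real.sqrt ((2-t)/(1-2*κ)))
      (a * (((0-1)/(1-2*κ)) / (2 * u))) s := h2.const_mul a
  have h5 : HasDerivAt (fun t : ℝ => artanh (a * Real.sqrt ((2-t)/(1-2*κ))))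
      ((1/(1-(a*u)^2)) * (a * (((0-1)/(1-2*κ)) / (2 * u)))) s :=
    (artanh_hasDerivAt hx1 hx1').comp (h₂ := artanh) s h3
  have h6 : HasDerivAt (fun t : ℝ => (3*t*κ - 4*κ - 1) / (4*a))
      ((3*1*κ)/(4*a)) s :=
    (((((hasDerivAt_id s).const_mul 3).mul_const κ).sub_const (4*κ)).sub_const 1).div_const _
  have h7 := h6.mul h5
  set B := Real.sqrt (1-2*κ) with hB_def
  set U := Real.sqrt (2-s) with hU_def
  have hB0 : 0 < B := Real.sqrt_pos.mpr hb
  have hU0 : 0 < U := Real.sqrt_pos.mpr h2s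
  have hUB : u * B = U := by
    rw [hu_def, hU_def, hB_def, Real.sqrt_div h2s.le]
    field_simp
  have h8 : HasDerivAt (fun t : ℝ => Real.sqrt (2-t)) ((0-1) / (2 * U)) s :=
    ((hasDerivAt_const s 2).sub (hasDerivAt_id s)).sqrt h2s.ne'
  have h9 := (h8.const_mul B).const_mul (3/4 : ℝ)
  have hF := h7.sub h9
  have hset : Set.Ioo (0:ℝ) 2 ∈ nhds s := isOpen_Ioo.mem_nhds ⟨hs0, hs2⟩
  have heq : pderiv κ =ᶠ[nhds s]
      (fun t => (3*t*κ - 4*κ - 1) / (4*a) * artanh (a * Real.sqrt ((2-t)/(1-2*κ)))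
        - 3/4 * (B * Real.sqrt (2-t))) := by
    refine Filter.eventuallyEq_of_mem hset (fun t ht => ?_)
    obtain ⟨ht0, ht2⟩ := ht
    have h2t : (0:ℝ) < 2 - t := by linarith
    unfold pderiv
    have hd : Real.sqrt ((1-2*κ)/(2-t)) = B / Real.sqrt (2-t) :=
      Real.sqrt_div (by linarith) _
    set V := Real.sqrt (2-t) with hV_def
    have hV0 : 0 < V := Real.sqrt_pos.mpr h2t
    have hV2 : V^2 = 2-t := Real.sq_sqrt h2t.le
    rw [hd, ← hV2, ← ha_def]
    field_simp
  have hP := hF.congr_of_eventuallyEq heq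
  have hval : (3*1*κ)/(4*a) * artanh (a*u)
        + (3*s*κ - 4*κ - 1)/(4*a) * ((1/(1-(a*u)^2)) * (a * (((0-1)/(1-2*κ)) / (2 * u))))
        - 3/4 * (B * ((0-1) / (2 * U))) = gfun κ s := by
    unfold gfun
    rw [hx, ← hUB]
    exact alg1 κ s a u B (artanh (a*u)) ha hu hB0 hb hks
  rw [← hval]
  exact hP

lemma hasDerivAt_gfun :
    HasDerivAt (gfun κ)
      (((1 - 2*κ)^2 / (4*(2 - s)*(1 - κ*s)^2)) * Real.sqrt ((1 - 2*κ) / (2 - s))) s := by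
  obtain ⟨ha, hb, h2s, hks, hu, hx⟩ := basic_facts hκ hs
  obtain ⟨hs0, hs2⟩ := hs
  set a := Real.sqrt (-κ) with ha_def
  set u := Real.sqrt ((2-s)/(1-2*κ)) with hu_def
  have hu2 : u^2 = (2-s)/(1-2*κ) := Real.sq_sqrt (by positivity)
  have hx2 : (a*u)^2 < 1 := by nlinarith [div_pos hks hb]
  have hxpos : 0 ≤ a*u := by positivity
  have hx1 : -1 < a*u := by nlinarith
  have hx1' : a*u < 1 := by nlinarith [sq_nonneg (1 - a*u)]
  have h1 : HasDerivAt (fun t : ℝ => (2-t)/(1-2*κ)) ((0-1)/(1-2*κ)) s :=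
    ((hasDerivAt_const s 2).sub (hasDerivAt_id s)).div_const _
  have h2 : HasDerivAt (fun t : ℝ => Real.sqrt ((2-t)/(1-2*κ)))
      (((0-1)/(1-2*κ)) / (2 * u)) s := h1.sqrt (by positivity)
  have h3 : HasDerivAt (fun t : ℝ => a * Real.sqrt ((2-t)/(1-2*κ)))
      (a * (((0-1)/(1-2*κ)) / (2 * u))) s := h2.const_mul a
  have h5 : HasDerivAt (fun t : ℝ => artanh (a * Real.sqrt ((2-t)/(1-2*κ))))
      ((1/(1-(a*u)^2)) * (a * (((0-1)/(1-2*κ)) / (2 * u)))) s :=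
    (artanh_hasDerivAt hx1 hx1').comp (h₂ := artanh) s h3
  have k1 := h5.const_mul (3*κ/(4*a))
  have k2 : HasDerivAt (fun t : ℝ => 2+2*κ-3*κ*t) (0 - 3*κ*1) s :=
    (hasDerivAt_const s (2+2*κ)).sub ((hasDerivAt_id s).const_mul (3*κ))
  have k3 : HasDerivAt (fun t : ℝ => 4*Real.sqrt ((2-t)/(1-2*κ))*(1-κ*t))
      ((4*(((0-1)/(1-2*κ)) / (2 * u)))*(1-κ*s) + (4*u)*(0-κ*1)) s :=
    (h2.const_mul 4).mul ((hasDerivAt_const s 1).sub ((hasDerivAt_id s).const_mul κ))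
  have hD : 4*u*(1-κ*s) ≠ 0 := by positivity
  have k4 := k2.div k3 hD
  have kg := k1.add k4
  have hs' : s = 2 - u^2*(1-2*κ) := by
    have h := hu2
    field_simp at h
    linarith
  have hv : Real.sqrt ((1-2*κ)/(2-s)) = 1/u := by
    have hv1 : Real.sqrt ((1-2*κ)/(2-s)) * u = 1 := by
      rw [hu_def, ← Real.sqrt_mul (by positivity)]
      rw [div_mul_div_comm, mul_comm (2-s), div_self (by positivity)]
      exact Real.sqrt_one
    rw [eq_div_iff hu.ne']
    exact hv1
  have hval : 3*κ/(4*a) * ((1/(1-(a*u)^2)) * (a * (((0-1)/(1-2*κ)) / (2 * u))))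
      + ((0 - 3*κ*1) * (4*u*(1-κ*s)) - (2+2*κ-3*κ*s) *
          ((4*(((0-1)/(1-2*κ)) / (2 * u)))*(1-κ*s) + (4*u)*(0-κ*1))) / (4*u*(1-κ*s))^2
      = ((1 - 2*κ)^2 / (4*(2 - s)*(1 - κ*s)^2)) * Real.sqrt ((1 - 2*κ) / (2 - s)) := by
    rw [hx, hv, hs']
    have hks' : (0:ℝ) < 1 - κ*(2 - u^2*(1-2*κ)) := by rw [← hs']; exact hks
    exact alg2 κ a u ha hu hb hks'
  rw [← hval]
  exact kg

end

/-- for `κ < 0`, the second derivative of `s ↦ p'_κ(√s)` on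
`(0,2)` equals `((1-2κ)²/(4(2-s)(1-κs)²))·√((1-2κ)/(2-s)) > 0`; hence
`p'_κ` is a strictly convex function of `c²` on `(0,2)`. -/
theorem stmt_15 (κ : ℝ) (hκ : κ < 0) :
    (∀ s ∈ Set.Ioo (0:ℝ) 2,
      deriv (deriv (pderiv κ)) s =
          ((1 - 2*κ)^2 / (4*(2 - s)*(1 - κ*s)^2)) *
            Real.sqrt ((1 - 2*κ) / (2 - s)) ∧
        0 < ((1 - 2*κ)^2 / (4*(2 - s)*(1 - κ*s)^2)) *
            Real.sqrt ((1 - 2*κ) / (2 - s))) ∧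
    StrictConvexOn ℝ (Set.Ioo (0:ℝ) 2) (pderiv κ) := by
  have hd2 : ∀ s ∈ Set.Ioo (0:ℝ) 2,
      deriv (deriv (pderiv κ)) s =
        ((1 - 2*κ)^2 / (4*(2 - s)*(1 - κ*s)^2)) * Real.sqrt ((1 - 2*κ) / (2 - s)) := by
    intro s hs
    have heq : deriv (pderiv κ) =ᶠ[nhds s] gfun κ :=
      Filter.eventuallyEq_of_mem (isOpen_Ioo.mem_nhds hs)
        (fun t ht => (hasDerivAt_pderiv hκ ht).deriv)
    rw [heq.deriv_eq]
    exact (hasDerivAt_gfun hκ hs).deriv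
  have hpos : ∀ s ∈ Set.Ioo (0:ℝ) 2,
      0 < ((1 - 2*κ)^2 / (4*(2 - s)*(1 - κ*s)^2)) * Real.sqrt ((1 - 2*κ) / (2 - s)) := by
    intro s hs
    obtain ⟨hb, h2s, hks⟩ : (0:ℝ) < 1-2*κ ∧ (0:ℝ) < 2-s ∧ (0:ℝ) < 1-κ*s := by
      obtain ⟨hs0, hs2⟩ := hs
      refine ⟨by linarith, by linarith, by nlinarith⟩
    have : (0:ℝ) < Real.sqrt ((1-2*κ)/(2-s)) := Real.sqrt_pos.mpr (by positivity)
    positivity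
  refine ⟨fun s hs => ⟨hd2 s hs, hpos s hs⟩, ?_⟩
  refine strictConvexOn_of_deriv2_pos (convex_Ioo 0 2)
    (fun s hs => (hasDerivAt_pderiv hκ hs).differentiableAt.continuousAt.continuousWithinAt)
    (fun s hs => ?_)
  rw [interior_Ioo] at hs
  have h := hd2 s hs
  have : deriv^[2] (pderiv κ) s = deriv (deriv (pderiv κ)) s := by
    simp [Function.iterate_succ, Function.iterate_one]
  rw [this, h]
  exact hpos s hs
end

section
/- Let c > 0, κ ∈ ℝ, and let η ∈ C²(ℝ) be a solution of the pair of equations (1−2κ+2κη)η'' + κ(η')² = −3η² + (2−c²)η and (1−2κ+2κη)(η')² = η²(2−c²−2η) on ℝ. Then η(x) < 1 for all x ∈ ℝ. -/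
lemma aux_stmt17 (c κ : ℝ) (hc : 0 < c) (η : ℝ → ℝ) (hreg : ContDiff ℝ 2 η)
    (hode1 : ∀ x : ℝ,
      (1 - 2*κ + 2*κ*η x) * (deriv η x)^2 = (η x)^2 * (2 - c^2 - 2*η x))
    (hgt : ∀ x : ℝ, 1 < η x) (hpos : ∀ x : ℝ, 0 < deriv η x) : False := by
  have hdiff : Differentiable ℝ η := hreg.differentiable (by norm_num)
  set M := η 0 with hM
  have hM1 : 1 < M := hgt 0
  set B := 1 + 2 * |κ| * (M-1) with hB
  have hBpos : 0 < B := by nlinarith [abs_nonneg κ]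
  set k := c / Real.sqrt B with hk
  have hkpos : 0 < k := div_pos hc (Real.sqrt_pos.2 hBpos)
  have hk2 : k^2 = c^2 / B := by
    rw [hk, div_pow, Real.sq_sqrt hBpos.le]
  have hmono : StrictMono η := strictMono_of_deriv_pos hpos
  have hbound : ∀ y ≤ (0:ℝ), k ≤ deriv η y := by
    intro y hy
    have hηy : η y ≤ M := hmono.le_iff_le.2 hy
    have h1 := hode1 y
    have hgty := hgt y
    have hA : |1 - 2*κ + 2*κ*η y| ≤ B := by
      have habs : |1 - 2*κ + 2*κ*η y| ≤ |(1:ℝ)| + |2*κ*(η y - 1)| := by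
        have : 1 - 2*κ + 2*κ*η y = 1 + 2*κ*(η y - 1) := by ring
        rw [this]; exact abs_add_le _ _
      have h2 : |2*κ*(η y - 1)| = 2 * |κ| * (η y - 1) := by
        rw [abs_mul, abs_mul, abs_of_pos (by linarith : (0:ℝ) < η y - 1)]
        norm_num
      rw [h2] at habs
      simp only [abs_one] at habs
      nlinarith [abs_nonneg κ]
    have hneg : (1 - 2*κ + 2*κ*η y) * (deriv η y)^2 ≤ -c^2 := by
      rw [h1]
      have ht : 0 < η y - 1 := by linarith
      nlinarith [mul_pos ht ht, mul_pos (mul_pos ht ht) ht, sq_nonneg c,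
        mul_nonneg (sq_nonneg c) ht.le, mul_nonneg (sq_nonneg c) (mul_pos ht ht).le]
    have hd2 : c^2 ≤ B * (deriv η y)^2 := by
      have hAl := (abs_le.1 hA).1
      nlinarith [sq_nonneg (deriv η y)]
    have hk2le : k^2 ≤ (deriv η y)^2 := by
      rw [hk2, div_le_iff₀ hBpos]
      nlinarith
    nlinarith [hpos y, hkpos]
  -- the function g y = η y - k * y is monotone on Iic 0
  have hgdiff : Differentiable ℝ (fun y : ℝ => η y - k * y) :=
    hdiff.sub ((differentiable_id.const_mul k))
  have hgderiv : ∀ y : ℝ, deriv (fun y : ℝ => η y - k * y) y = deriv η y - k := by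
    intro y
    have h : HasDerivAt (fun y : ℝ => η y - k * y) (deriv η y - k) y := by
      exact ((hdiff y).hasDerivAt.sub ((hasDerivAt_id y).const_mul k)).congr_deriv (by ring)
    exact h.deriv
  have hgmono : MonotoneOn (fun y : ℝ => η y - k * y) (Set.Iic 0) := by
    apply monotoneOn_of_deriv_nonneg (convex_Iic 0) hgdiff.continuous.continuousOn
      (hgdiff.differentiableOn.mono interior_subset)
    intro y hy
    rw [hgderiv]
    have : y ≤ 0 := le_of_lt (by simpa using hy)
    linarith [hbound y this]
  set y₀ : ℝ := (1 - M)/k - 1 with hy₀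
  have hy₀le : y₀ ≤ 0 := by
    have h2 : (1 - M)/k ≤ 0 := div_nonpos_of_nonpos_of_nonneg (by linarith) hkpos.le
    rw [hy₀]; linarith
  have hle : η y₀ - k * y₀ ≤ M - k * 0 := by
    have := hgmono (Set.mem_Iic.2 hy₀le) (Set.mem_Iic.2 le_rfl) hy₀le
    simpa using this
  have hky₀ : k * y₀ = (1 - M) - k := by
    rw [hy₀]
    field_simp
  have : η y₀ ≤ 1 - k := by
    rw [hky₀] at hle
    linarith
  linarith [hgt y₀, hkpos]

/-- if `c > 0` and `η ∈ C²(ℝ)` solves both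
`(1-2κ+2κη)η'' + κ(η')² = -3η² + (2-c²)η` and
`(1-2κ+2κη)(η')² = η²(2-c²-2η)` on `ℝ`, then `η < 1` everywhere. -/
theorem stmt_17 (c κ : ℝ) (hc : 0 < c) (η : ℝ → ℝ)
    (hreg : ContDiff ℝ 2 η)
    (hode2 : ∀ x : ℝ,
      (1 - 2*κ + 2*κ*η x) * deriv (deriv η) x + κ*(deriv η x)^2 =
        -3*(η x)^2 + (2 - c^2)*η x)
    (hode1 : ∀ x : ℝ,
      (1 - 2*κ + 2*κ*η x) * (deriv η x)^2 = (η x)^2 * (2 - c^2 - 2*η x)) :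
    ∀ x : ℝ, η x < 1 := by
  have hcont : Continuous η := hreg.continuous
  have hne1 : ∀ x : ℝ, η x ≠ 1 := by
    intro x hx
    have h1 := hode1 x
    rw [hx] at h1
    nlinarith [sq_nonneg (deriv η x), sq_nonneg c]
  intro x
  by_contra hx
  push_neg at hx
  have hx' : 1 < η x := lt_of_le_of_ne hx (Ne.symm (hne1 x))
  have hgt : ∀ y : ℝ, 1 < η y := by
    intro y
    rcases lt_or_gt_of_ne (hne1 y) with h | h
    · exfalso
      have hmem : (1:ℝ) ∈ Set.uIcc (η x) (η y) := by
        rw [Set.mem_uIcc]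
        right; exact ⟨h.le, hx'.le⟩
      obtain ⟨z, _, hz⟩ := intermediate_value_uIcc (hcont.continuousOn) hmem
      exact hne1 z hz
    · exact h
  have hdc : Continuous (deriv η) := hreg.continuous_deriv (by norm_num)
  have hdne : ∀ y : ℝ, deriv η y ≠ 0 := by
    intro y h0
    have h1 := hode1 y
    rw [h0] at h1
    have hprod : (η y)^2 * (2 - c^2 - 2*η y) < 0 :=
      mul_neg_of_pos_of_neg (by nlinarith [hgt y]) (by nlinarith [hgt y, sq_nonneg c])
    nlinarith [hprod]
  rcases (hdne 0).lt_or_gt with h0 | h0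
  · -- deriv η < 0 everywhere; apply aux to x ↦ η (-x)
    have hneg : ∀ y : ℝ, deriv η y < 0 := by
      intro y
      rcases (hdne y).lt_or_gt with h | h
      · exact h
      · exfalso
        have hmem : (0:ℝ) ∈ Set.uIcc (deriv η 0) (deriv η y) := by
          rw [Set.mem_uIcc]; left; exact ⟨h0.le, h.le⟩
        obtain ⟨z, _, hz⟩ := intermediate_value_uIcc (hdc.continuousOn) hmem
        exact hdne z hz
    refine aux_stmt17 c κ hc (fun x => η (-x)) (hreg.comp contDiff_neg) ?_
      (fun x => hgt (-x)) ?_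
    · intro y
      rw [deriv_comp_neg, neg_sq]
      exact hode1 (-y)
    · intro y
      rw [deriv_comp_neg]
      linarith [hneg (-y)]
  · have hpos : ∀ y : ℝ, 0 < deriv η y := by
      intro y
      rcases (hdne y).lt_or_gt with h | h
      · exfalso
        have hmem : (0:ℝ) ∈ Set.uIcc (deriv η 0) (deriv η y) := by
          rw [Set.mem_uIcc]; right; exact ⟨h.le, h0.le⟩
        obtain ⟨z, _, hz⟩ := intermediate_value_uIcc (hdc.continuousOn) hmem
        exact hdne z hz
      · exact h
    exact aux_stmt17 c κ hc η hreg hode1 hgt hpos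
end
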